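/- For every integer n ≥ 1 and every real R > 0, the integral ∫_{B_{ℝ^{2n}}(0,R)} (1 − 2t₁²)/(1 + 2t₁²)² dt₁…dt_{2n} is strictly positive. -/

import Mathlib

open MeasureTheory

noncomputable def ff (x : ℝ) : ℝ := (1 - 2 * x ^ 2) / (1 + 2 * x ^ 2) ^ 2

lemma ff_denom_pos (x : ℝ) : (0:ℝ) < 1 + 2 * x ^ 2 := by positivity

lemma ff_cont : Continuous ff := by
  unfold ff
  exact (continuous_const.sub (continuous_const.mul (continuous_id.pow 2))).div
    ((continuous_const.add (continuous_const.mul (continuous_id.pow 2))).pow 2)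
    (fun x => by positivity)

lemma hasDerivAt_G (x : ℝ) : HasDerivAt (fun x : ℝ => x / (1 + 2 * x ^ 2)) (ff x) x := by
  have h : HasDerivAt (fun x : ℝ => 1 + 2 * x ^ 2) (4 * x) x := by
    have := ((hasDerivAt_pow 2 x).const_mul 2).const_add 1
    refine this.congr_deriv ?_
    push_cast
    ring
  have h2 := (hasDerivAt_id x).div h (ff_denom_pos x).ne'
  refine h2.congr_deriv ?_
  unfold ff
  simp only [id]
  field_simp
  ring

lemma integral_ff (s : ℝ) (hs : 0 ≤ s) :
    ∫ x in Set.Ioo (-s) s, ff x = 2 * s / (1 + 2 * s ^ 2) := by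
  rw [← MeasureTheory.integral_Ioc_eq_integral_Ioo,
    ← intervalIntegral.integral_of_le (by linarith : -s ≤ s)]
  rw [intervalIntegral.integral_eq_sub_of_hasDerivAt (fun x _ => hasDerivAt_G x)
    (ff_cont.intervalIntegrable _ _)]
  have h1 : (0:ℝ) < 1 + 2 * s ^ 2 := by positivity
  field_simp
  ring

lemma sq_lt_iff_mem_Ioo (c x : ℝ) :
    x ^ 2 < c ↔ x ∈ Set.Ioo (-(Real.sqrt c)) (Real.sqrt c) := by
  constructor
  · intro h
    have hc : 0 < c := lt_of_le_of_lt (sq_nonneg x) h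
    have habs : |x| < Real.sqrt c := by
      rw [← Real.sqrt_sq_eq_abs]
      exact Real.sqrt_lt_sqrt (sq_nonneg x) h
    exact abs_lt.mp habs
  · rintro ⟨h1, h2⟩
    have hs : 0 < Real.sqrt c := by linarith
    have hc : 0 < c := Real.sqrt_pos.mp hs
    have habs : |x| < Real.sqrt c := abs_lt.mpr ⟨h1, h2⟩
    calc x ^ 2 = |x| ^ 2 := (sq_abs x).symm
      _ < Real.sqrt c ^ 2 := by nlinarith [abs_nonneg x]
      _ = c := Real.sq_sqrt hc.le

lemma aux (k : ℕ) (R : ℝ) (hR : 0 < R) :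
    0 < ∫ t in Metric.ball (0 : EuclideanSpace ℝ (Fin (k+1))) R, ff (t ⟨0, k.succ_pos⟩) := by
  classical
  set i0 : Fin (k+1) := ⟨0, k.succ_pos⟩ with hi0
  set B : Set (EuclideanSpace ℝ (Fin (k+1))) := Metric.ball 0 R with hB
  set g : EuclideanSpace ℝ (Fin (k+1)) → ℝ := fun t => ff (t i0) with hg
  -- continuity and integrability of g on B
  have hcontg : Continuous g := ff_cont.comp (EuclideanSpace.proj i0).continuous
  have hIntB : IntegrableOn g B volume := by
    have h1 : IntegrableOn g (Metric.closedBall (0 : EuclideanSpace ℝ (Fin (k+1))) R) volume :=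
      (hcontg.continuousOn).integrableOn_compact (isCompact_closedBall _ R)
    exact h1.mono_set Metric.ball_subset_closedBall
  -- the two measure-preserving equivalences
  set e := (MeasurableEquiv.toLp 2 (Fin (k+1) → ℝ)).symm with he_def
  set p := MeasurableEquiv.piFinSuccAbove (fun _ : Fin (k+1) => ℝ) i0 with hp_def
  have he : MeasurePreserving e.symm := (EuclideanSpace.volume_preserving_symm_measurableEquiv_toLp _).symm
  have hp : MeasurePreserving p.symm :=
    (volume_preserving_piFinSuccAbove (fun _ : Fin (k+1) => ℝ) i0).symm
  set q : ℝ × (Fin k → ℝ) → EuclideanSpace ℝ (Fin (k+1)) := fun z => e.symm (p.symm z) with hq_def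
  have hq : MeasurePreserving q := he.comp hp
  have hqemb : MeasurableEmbedding q :=
    e.symm.measurableEmbedding.comp p.symm.measurableEmbedding
  set T : Set (ℝ × (Fin k → ℝ)) := q ⁻¹' B with hT_def
  -- key pointwise identities
  have hq1 : ∀ z : ℝ × (Fin k → ℝ), (q z) i0 = z.1 := by
    intro z
    show (p.symm z) i0 = z.1
    simp [hp_def, MeasurableEquiv.piFinSuccAbove_symm_apply]
  have hTmem : ∀ z : ℝ × (Fin k → ℝ), z ∈ T ↔ z.1 ^ 2 + ∑ j, (z.2 j) ^ 2 < R ^ 2 := by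
    intro z
    have : z ∈ T ↔ ‖q z‖ < R := by
      simp [hT_def, hB, Metric.mem_ball, dist_zero_right]
    rw [this, EuclideanSpace.norm_eq]
    rw [Real.sqrt_lt' hR]
    have hsum : ∑ i, ‖(q z) i‖ ^ 2 = z.1 ^ 2 + ∑ j, (z.2 j) ^ 2 := by
      rw [Fin.sum_univ_succAbove (fun i => ‖(q z) i‖ ^ 2) i0]
      congr 1
      · rw [hq1 z]; exact sq_abs _
      · apply Finset.sum_congr rfl
        intro j _
        have : (q z) (i0.succAbove j) = z.2 j := by
          show (p.symm z) (i0.succAbove j) = z.2 j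
          simp [hp_def, MeasurableEquiv.piFinSuccAbove_symm_apply]
        rw [this]; exact sq_abs _
    rw [hsum]
  -- auxiliary functions on the slice space
  set Q : (Fin k → ℝ) → ℝ := fun y => ∑ j, (y j) ^ 2 with hQ_def
  set sfn : (Fin k → ℝ) → ℝ := fun y => Real.sqrt (R ^ 2 - Q y) with hs_def
  set H : (Fin k → ℝ) → ℝ := fun y => 2 * sfn y / (1 + 2 * (sfn y) ^ 2) with hH_def
  have hQcont : Continuous Q := by
    apply continuous_finset_sum
    intro j _
    exact (continuous_apply j).pow 2
  have hTopen : IsOpen T := by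
    have hTeq : T = {z : ℝ × (Fin k → ℝ) | z.1 ^ 2 + Q z.2 < R ^ 2} := Set.ext fun z => hTmem z
    rw [hTeq]
    exact isOpen_lt ((continuous_fst.pow 2).add (hQcont.comp continuous_snd)) continuous_const
  have hTmeas : MeasurableSet T := hTopen.measurableSet
  have hBmeas : MeasurableSet B := measurableSet_ball
  set F : ℝ × (Fin k → ℝ) → ℝ := T.indicator (fun z => ff z.1) with hF_def
  have hcompF : (B.indicator g) ∘ q = F := by
    funext z
    by_cases hz : z ∈ T
    · have hzB : q z ∈ B := hz
      simp only [Function.comp_apply, hF_def, Set.indicator_of_mem hz, Set.indicator_of_mem hzB]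
      show ff ((q z) i0) = ff z.1
      rw [hq1]
    · have hzB : q z ∉ B := hz
      simp only [Function.comp_apply, hF_def, Set.indicator_of_notMem hz,
        Set.indicator_of_notMem hzB]
  have hIntind : Integrable (B.indicator g) volume := (integrable_indicator_iff hBmeas).mpr hIntB
  have hIntF : Integrable F volume := by
    have h2 := (hq.integrable_comp_emb hqemb).mpr hIntind
    rwa [hcompF] at h2
  have hvol : (volume : Measure (ℝ × (Fin k → ℝ))) = (volume : Measure ℝ).prod volume :=
    Measure.volume_eq_prod ℝ (Fin k → ℝ)
  have hIntF' : Integrable F ((volume : Measure ℝ).prod volume) := hvol ▸ hIntF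
  have step1 : ∫ t in B, g t = ∫ z in T, ff z.1 := by
    rw [← hq.setIntegral_preimage_emb hqemb g B]
    have hfg : (fun z => g (q z)) = fun z : ℝ × (Fin k → ℝ) => ff z.1 :=
      funext fun z => congrArg ff (hq1 z)
    rw [show (fun z => g (q z)) = fun z : ℝ × (Fin k → ℝ) => ff z.1 from hfg]
  have step2 : ∫ z in T, ff z.1 = ∫ y, ∫ x, F (x, y) := by
    rw [← integral_indicator hTmeas, ← hF_def, hvol]
    exact integral_prod_symm F hIntF'
  have hinner : ∀ y, (∫ x, F (x, y)) = H y := by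
    intro y
    have hmem : ∀ x : ℝ, (x, y) ∈ T ↔ x ∈ Set.Ioo (-(sfn y)) (sfn y) := by
      intro x
      rw [hTmem (x, y), hs_def]
      show x ^ 2 + Q y < R ^ 2 ↔ _
      rw [← sq_lt_iff_mem_Ioo (R ^ 2 - Q y) x]
      constructor <;> intro <;> linarith
    have hfun : (fun x => F (x, y)) = (Set.Ioo (-(sfn y)) (sfn y)).indicator ff := by
      funext x
      by_cases hx : (x, y) ∈ T
      · have hx' : x ∈ Set.Ioo (-(sfn y)) (sfn y) := (hmem x).mp hx
        simp only [hF_def, Set.indicator_of_mem hx, Set.indicator_of_mem hx']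
      · have hx' : x ∉ Set.Ioo (-(sfn y)) (sfn y) := fun h => hx ((hmem x).mpr h)
        simp only [hF_def, Set.indicator_of_notMem hx, Set.indicator_of_notMem hx']
    rw [hfun, integral_indicator measurableSet_Ioo, integral_ff _ (Real.sqrt_nonneg _)]
  have hHint : Integrable H volume := by
    have h3 := hIntF'.integral_prod_right
    rwa [funext hinner] at h3
  have hHnonneg : ∀ y, 0 ≤ H y := by
    intro y
    have h1 : 0 ≤ sfn y := Real.sqrt_nonneg _
    have h2 : (0:ℝ) < 1 + 2 * (sfn y) ^ 2 := by positivity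
    exact div_nonneg (by linarith) h2.le
  have hsupp : {y : Fin k → ℝ | Q y < R ^ 2} ⊆ Function.support H := by
    intro y hy
    have h1 : 0 < sfn y := Real.sqrt_pos.mpr (by simp only [Set.mem_setOf_eq] at hy; linarith)
    have h2 : (0:ℝ) < 1 + 2 * (sfn y) ^ 2 := by positivity
    exact ne_of_gt (div_pos (by linarith) h2)
  have hopen : IsOpen {y : Fin k → ℝ | Q y < R ^ 2} := isOpen_lt hQcont continuous_const
  have hne : (0 : Fin k → ℝ) ∈ {y : Fin k → ℝ | Q y < R ^ 2} := by
    have hz : (∑ j : Fin k, ((0 : Fin k → ℝ) j) ^ 2) = 0 := by simp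
    simp only [Set.mem_setOf_eq, hQ_def, hz]
    positivity
  have hpos : 0 < volume (Function.support H) :=
    lt_of_lt_of_le (hopen.measure_pos volume ⟨0, hne⟩) (measure_mono hsupp)
  have hfinal : 0 < ∫ y, H y := (integral_pos_iff_support_of_nonneg hHnonneg hHint).mpr hpos
  show 0 < ∫ t in B, g t
  rw [step1, step2]
  simp only [hinner]
  exact hfinal

lemma aux' (m : ℕ) (hm : 0 < m) (R : ℝ) (hR : 0 < R) :
    0 < ∫ t in Metric.ball (0 : EuclideanSpace ℝ (Fin m)) R, ff (t ⟨0, hm⟩) := by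
  obtain ⟨k, rfl⟩ : ∃ k, m = k + 1 := ⟨m - 1, by omega⟩
  exact aux k R hR

theorem stmt1 (n : ℕ) (hn : 1 ≤ n) (R : ℝ) (hR : 0 < R) :
    0 < ∫ t in Metric.ball (0 : EuclideanSpace ℝ (Fin (2 * n))) R,
        (1 - 2 * (t ⟨0, by omega⟩) ^ 2) / (1 + 2 * (t ⟨0, by omega⟩) ^ 2) ^ 2 := by
  have h := aux' (2 * n) (by omega) R hR
  unfold ff at h
  exact h
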